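/- Let x be a real-valued function on p-subsets of [n] and y a real-valued function on q-subsets of [n] (p ≤ q), and let S ⊆ T with |S| = p−1, |T| = q+1. Consider the regular subdivision of the face Δ_{S,T} induced by the weights w(e_{S∪{i}}) = x_{S∪{i}} and w(e_{T∖{i}}) = y_{T∖{i}}. This subdivision has the same 1-skeleton as Δ_{S,T} if and only if the minimum over i ∈ T∖S of x_{S∪{i}} + y_{T∖{i}} is attained at least twice. -/

import Mathlib

open Finset

/-- The 0/1 indicator vector `e_I ∈ ℝⁿ` of a subset `I ⊆ [n]`. -/
def eInd {n : ℕ} (I : Finset (Fin n)) : Fin n → ℝ := fun i => if i ∈ I then 1 else 0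

/-- The minimum of `f` over the finite set `s` is attained at least twice. -/
def MinTwiceOn {α : Type*} [DecidableEq α] (s : Finset α) (f : α → ℝ) : Prop :=
  ∃ a ∈ s, ∃ b ∈ s, a ≠ b ∧ f a = f b ∧ ∀ c ∈ s, f a ≤ f c

/-- The minimum of the three reals `a`, `b`, `c` is attained at least twice. -/
def ThreeMinTwice (a b c : ℝ) : Prop :=
  (a = b ∧ a ≤ c) ∨ (a = c ∧ a ≤ b) ∨ (b = c ∧ b ≤ a)

/-- `x` is a tropical Plücker vector of rank `d` on `[n]`: for every `S` of size `d-2`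
and distinct `i,j,k,l ∉ S`, the minimum of the three pairwise sums is attained twice. -/
def TropPlucker (n d : ℕ) (x : Finset (Fin n) → ℝ) : Prop :=
  ∀ (S : Finset (Fin n)) (i j k l : Fin n),
    S.card = d - 2 → i ∉ S → j ∉ S → k ∉ S → l ∉ S →
    i ≠ j → i ≠ k → i ≠ l → j ≠ k → j ≠ l → k ≠ l →
    ThreeMinTwice
      (x (S ∪ {i, j}) + x (S ∪ {k, l}))
      (x (S ∪ {i, k}) + x (S ∪ {j, l}))
      (x (S ∪ {i, l}) + x (S ∪ {j, k}))

/-- The linear functional on `ℝⁿ` with covector `a`. -/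
def lin {n : ℕ} (a : Fin n → ℝ) (z : Fin n → ℝ) : ℝ := ∑ i, a i * z i

/-- `[u,v]` is an edge of the polytope with (finite) vertex set `V`: some linear
functional attains its maximum over `V` exactly at `u` and `v`, `u ≠ v`. -/
def IsEdge {n : ℕ} (V : Set (Fin n → ℝ)) (u v : Fin n → ℝ) : Prop :=
  u ∈ V ∧ v ∈ V ∧ u ≠ v ∧
  ∃ a : Fin n → ℝ, (∀ z ∈ V, lin a z ≤ lin a u) ∧ lin a u = lin a v ∧
    ∀ z ∈ V, lin a z = lin a u → z = u ∨ z = v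

/-- `[u,v]` is a 1-cell of the regular subdivision of the polytope with vertex set `V`
induced by the weights `w`: some affine functional `z ↦ lin a z + c` is dominated by `w`
on `V` and touches `w` exactly at `u` and `v`, `u ≠ v`. -/
def IsCellEdge {n : ℕ} (V : Set (Fin n → ℝ)) (w : (Fin n → ℝ) → ℝ)
    (u v : Fin n → ℝ) : Prop :=
  u ∈ V ∧ v ∈ V ∧ u ≠ v ∧
  ∃ (a : Fin n → ℝ) (c : ℝ), (∀ z ∈ V, lin a z + c ≤ w z) ∧
    lin a u + c = w u ∧ lin a v + c = w v ∧
    ∀ z ∈ V, lin a z + c = w z → z = u ∨ z = v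

/-- The vertex set of `Δ(p,q;n)`: all indicator vectors `e_K` with `|K| ∈ {p,q}`. -/
def DeltaVerts (n p q : ℕ) : Set (Fin n → ℝ) :=
  {v | ∃ K : Finset (Fin n), (K.card = p ∨ K.card = q) ∧ v = eInd K}

/-- The vertex set of the face `Δ_{S,T}`: the vectors `e_{S∪{i}}` and `e_{T∖{i}}`
for `i ∈ T∖S`. -/
def DeltaSTVerts {n : ℕ} (S T : Finset (Fin n)) : Set (Fin n → ℝ) :=
  {v | ∃ i ∈ T \ S, v = eInd (insert i S) ∨ v = eInd (T.erase i)}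

/-- The vertex set of the cross-polytope `P_n`: `{±e_i : i ∈ [n]}`. -/
def CrossVerts (n : ℕ) : Set (Fin n → ℝ) :=
  {v | ∃ i : Fin n, v = eInd {i} ∨ v = -(eInd {i})}

/-- `M'` is a quotient of `M` (the matroids are concordant):
every flat of `M'` is a flat of `M`. -/
def MatroidQuotient {α : Type*} (M' M : Matroid α) : Prop :=
  ∀ F : Set α, M'.IsFlat F → M.IsFlat F


lemma eInd_inj {n : ℕ} {I J : Finset (Fin n)} (h : eInd I = eInd J) : I = J := by
  ext k
  have := congrFun h k
  by_cases hI : k ∈ I <;> by_cases hJ : k ∈ J <;>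
    simp [eInd, hI, hJ] at this ⊢

lemma lin_eInd {n : ℕ} (a : Fin n → ℝ) (K : Finset (Fin n)) :
    lin a (eInd K) = ∑ k ∈ K, a k := by
  simp [lin, eInd, mul_ite, Finset.sum_ite_mem]

lemma sum_a_eval {n : ℕ} (i j : Fin n) (α β γ : ℝ) (T K : Finset (Fin n)) (hK : K ⊆ T) :
    ∑ k ∈ K, ((if k = i then α else 0) + (if k = j then β else 0) + (if k ∈ T then γ else 0))
      = (if i ∈ K then α else 0) + (if j ∈ K then β else 0) + K.card * γ := by
  rw [Finset.sum_add_distrib, Finset.sum_add_distrib, Finset.sum_ite_eq' K i,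
    Finset.sum_ite_eq' K j]
  congr 1
  rw [Finset.sum_congr rfl (fun k hk => if_pos (hK hk)), Finset.sum_const, nsmul_eq_mul]

lemma sum_pair {n : ℕ} {S T : Finset (Fin n)} {k : Fin n} (hkS : k ∉ S) (hkT : k ∈ T)
    (a : Fin n → ℝ) :
    ∑ x ∈ insert k S, a x + ∑ x ∈ T.erase k, a x = ∑ x ∈ S, a x + ∑ x ∈ T, a x := by
  rw [Finset.sum_insert hkS]
  have := Finset.sum_erase_add T a hkT
  linarith

lemma eval_u {n : ℕ} {S T : Finset (Fin n)} {i j k : Fin n} (α β γ : ℝ)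
    (hi : i ∈ T \ S) (hj : j ∈ T \ S) (hk : k ∈ T \ S) (hST : S ⊆ T) :
    lin (fun m => (if m = i then α else 0) + (if m = j then β else 0) + (if m ∈ T then γ else 0))
      (eInd (insert k S))
    = (if i = k then α else 0) + (if j = k then β else 0) + ((insert k S).card : ℝ) * γ := by
  simp only [mem_sdiff] at hi hj hk
  rw [lin_eInd, sum_a_eval i j α β γ T _ (by
    intro m hm
    rcases Finset.mem_insert.1 hm with rfl | hm
    · exact hk.1
    · exact hST hm)]
  simp [Finset.mem_insert, hi.2, hj.2]

lemma eval_v {n : ℕ} {S T : Finset (Fin n)} {i j k : Fin n} (α β γ : ℝ)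
    (hi : i ∈ T \ S) (hj : j ∈ T \ S) :
    lin (fun m => (if m = i then α else 0) + (if m = j then β else 0) + (if m ∈ T then γ else 0))
      (eInd (T.erase k))
    = (if i = k then 0 else α) + (if j = k then 0 else β) + ((T.erase k).card : ℝ) * γ := by
  simp only [mem_sdiff] at hi hj
  rw [lin_eInd, sum_a_eval i j α β γ T _ (Finset.erase_subset _ _)]
  simp only [Finset.mem_erase, hi.1, hj.1, and_true]
  congr 1
  congr 1
  · rcases eq_or_ne i k with h | h <;> simp [h]
  · rcases eq_or_ne j k with h | h <;> simp [h]

lemma insert_ne_insert {n : ℕ} {S : Finset (Fin n)} {i j : Fin n}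
    (hiS : i ∉ S) (hij : i ≠ j) : eInd (insert i S) ≠ eInd (insert j S) := by
  intro h
  have h2 := eInd_inj h
  have : i ∈ insert j S := h2 ▸ Finset.mem_insert_self i S
  rcases Finset.mem_insert.1 this with h3 | h3
  · exact hij h3
  · exact hiS h3

lemma erase_ne_erase {n : ℕ} {T : Finset (Fin n)} {i j : Fin n}
    (hiT : i ∈ T) (hij : i ≠ j) : eInd (T.erase i) ≠ eInd (T.erase j) := by
  intro h
  have h2 := eInd_inj h
  have : i ∈ T.erase i := by
    rw [h2]; exact Finset.mem_erase.2 ⟨hij, hiT⟩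
  simp at this

lemma insert_ne_erase {n : ℕ} {p q : ℕ} {S T : Finset (Fin n)} {i j : Fin n} (hplt : p < q)
    (hcu : ((insert i S).card : ℝ) = p) (hcv : ((T.erase j).card : ℝ) = q) :
    eInd (insert i S) ≠ eInd (T.erase j) := by
  intro h
  have h2 := eInd_inj h
  rw [h2] at hcu
  rw [hcu] at hcv
  exact absurd (by exact_mod_cast hcv) (Nat.ne_of_lt hplt)

lemma edge_uu {n : ℕ} {p q : ℕ} {S T : Finset (Fin n)} (hST : S ⊆ T) (hplt : p < q)
    (hcu : ∀ k ∈ T \ S, ((insert k S).card : ℝ) = p)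
    (hcv : ∀ k ∈ T \ S, ((T.erase k).card : ℝ) = q)
    {i j : Fin n} (hi : i ∈ T \ S) (hj : j ∈ T \ S) (hij : i ≠ j) :
    IsEdge (DeltaSTVerts S T) (eInd (insert i S)) (eInd (insert j S)) := by
  have hq : (0:ℝ) < (q:ℝ) - p := by
    have : (p:ℝ) < q := by exact_mod_cast hplt
    linarith
  set t : ℝ := 2 / ((q:ℝ) - p) with ht
  have htqp : t * ((q:ℝ) - p) = 2 := by
    rw [ht]; field_simp
  have hd : t * (q:ℝ) - t * (p:ℝ) = 2 := by rw [← htqp]; ring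
  set a : Fin n → ℝ := fun m =>
    (if m = i then 1 else 0) + (if m = j then 1 else 0) + (if m ∈ T then -t else 0) with ha
  have vu : ∀ k ∈ T \ S, lin a (eInd (insert k S)) =
      (if i = k then 1 else 0) + (if j = k then 1 else 0) + (p:ℝ) * (-t) := by
    intro k hk
    rw [ha, eval_u 1 1 (-t) hi hj hk hST, hcu k hk]
  have vv : ∀ k ∈ T \ S, lin a (eInd (T.erase k)) =
      (if i = k then 0 else 1) + (if j = k then 0 else 1) + (q:ℝ) * (-t) := by
    intro k hk
    rw [ha, eval_v 1 1 (-t) hi hj, hcv k hk]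
  have M : lin a (eInd (insert i S)) = 1 + (p:ℝ) * (-t) := by
    rw [vu i hi, if_pos rfl, if_neg (Ne.symm hij)]; ring
  have bA : ∀ k : Fin n, (if i = k then (1:ℝ) else 0) + (if j = k then 1 else 0) ≤ 1 := by
    intro k
    rcases eq_or_ne i k with h1 | h1
    · rw [if_pos h1, if_neg (fun h => hij (h1.trans h.symm))]; norm_num
    · rw [if_neg h1]; split <;> norm_num
  have bB : ∀ k : Fin n, (if i = k then (0:ℝ) else 1) + (if j = k then 0 else 1) ≤ 2 := by
    intro k; split_ifs <;> norm_num
  refine ⟨⟨i, hi, Or.inl rfl⟩, ⟨j, hj, Or.inl rfl⟩,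
    insert_ne_insert (Finset.mem_sdiff.1 hi).2 hij, a, ?_, ?_, ?_⟩
  · rintro z ⟨k, hk, rfl | rfl⟩ <;> rw [M]
    · rw [vu k hk]; linarith [bA k]
    · rw [vv k hk]; linarith [bB k, hd]
  · rw [M, vu j hj, if_neg hij, if_pos rfl]; ring
  · rintro z ⟨k, hk, rfl | rfl⟩ heq <;> rw [M] at heq
    · rw [vu k hk] at heq
      rcases eq_or_ne i k with h1 | h1
      · exact Or.inl (by rw [h1])
      rcases eq_or_ne j k with h2 | h2
      · exact Or.inr (by rw [h2])
      · rw [if_neg h1, if_neg h2] at heq; linarith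
    · rw [vv k hk] at heq
      exfalso; linarith [bB k, hd]

lemma edge_vv {n : ℕ} {p q : ℕ} {S T : Finset (Fin n)} (hST : S ⊆ T) (hplt : p < q)
    (hcu : ∀ k ∈ T \ S, ((insert k S).card : ℝ) = p)
    (hcv : ∀ k ∈ T \ S, ((T.erase k).card : ℝ) = q)
    {i j : Fin n} (hi : i ∈ T \ S) (hj : j ∈ T \ S) (hij : i ≠ j) :
    IsEdge (DeltaSTVerts S T) (eInd (T.erase i)) (eInd (T.erase j)) := by
  have hq : (0:ℝ) < (q:ℝ) - p := by
    have : (p:ℝ) < q := by exact_mod_cast hplt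
    linarith
  set t : ℝ := 2 / ((q:ℝ) - p) with ht
  have htqp : t * ((q:ℝ) - p) = 2 := by
    rw [ht]; field_simp
  have hd : t * (q:ℝ) - t * (p:ℝ) = 2 := by rw [← htqp]; ring
  set a : Fin n → ℝ := fun m =>
    (if m = i then -1 else 0) + (if m = j then -1 else 0) + (if m ∈ T then t else 0) with ha
  have vu : ∀ k ∈ T \ S, lin a (eInd (insert k S)) =
      (if i = k then -1 else 0) + (if j = k then -1 else 0) + (p:ℝ) * t := by
    intro k hk
    rw [ha, eval_u (-1) (-1) t hi hj hk hST, hcu k hk]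
  have vv : ∀ k ∈ T \ S, lin a (eInd (T.erase k)) =
      (if i = k then 0 else -1) + (if j = k then 0 else -1) + (q:ℝ) * t := by
    intro k hk
    rw [ha, eval_v (-1) (-1) t hi hj, hcv k hk]
  have M : lin a (eInd (T.erase i)) = -1 + (q:ℝ) * t := by
    rw [vv i hi, if_pos rfl, if_neg (Ne.symm hij)]; ring
  have bA : ∀ k : Fin n, (if i = k then (-1:ℝ) else 0) + (if j = k then -1 else 0) ≤ 0 := by
    intro k; split_ifs <;> norm_num
  have bB : ∀ k : Fin n, (if i = k then (0:ℝ) else -1) + (if j = k then 0 else -1) ≤ -1 := by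
    intro k
    rcases eq_or_ne i k with h1 | h1
    · rw [if_pos h1, if_neg (fun h => hij (h1.trans h.symm))]; norm_num
    · rw [if_neg h1]; split <;> norm_num
  refine ⟨⟨i, hi, Or.inr rfl⟩, ⟨j, hj, Or.inr rfl⟩,
    erase_ne_erase (Finset.mem_sdiff.1 hi).1 hij, a, ?_, ?_, ?_⟩
  · rintro z ⟨k, hk, rfl | rfl⟩ <;> rw [M]
    · rw [vu k hk]; linarith [bA k, hd]
    · rw [vv k hk]; linarith [bB k]
  · rw [M, vv j hj, if_neg hij, if_pos rfl]; ring
  · rintro z ⟨k, hk, rfl | rfl⟩ heq <;> rw [M] at heq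
    · rw [vu k hk] at heq
      exfalso; linarith [bA k, hd]
    · rw [vv k hk] at heq
      rcases eq_or_ne i k with h1 | h1
      · exact Or.inl (by rw [h1])
      rcases eq_or_ne j k with h2 | h2
      · exact Or.inr (by rw [h2])
      · rw [if_neg h1, if_neg h2] at heq; linarith

lemma edge_uv {n : ℕ} {p q : ℕ} {S T : Finset (Fin n)} (hST : S ⊆ T) (hplt : p < q)
    (hcu : ∀ k ∈ T \ S, ((insert k S).card : ℝ) = p)
    (hcv : ∀ k ∈ T \ S, ((T.erase k).card : ℝ) = q)
    {i j : Fin n} (hi : i ∈ T \ S) (hj : j ∈ T \ S) (hij : i ≠ j) :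
    IsEdge (DeltaSTVerts S T) (eInd (insert i S)) (eInd (T.erase j)) := by
  set a : Fin n → ℝ := fun m =>
    (if m = i then 1 else 0) + (if m = j then -1 else 0) + (if m ∈ T then 0 else 0) with ha
  have vu : ∀ k ∈ T \ S, lin a (eInd (insert k S)) =
      (if i = k then 1 else 0) + (if j = k then -1 else 0) + ((insert k S).card : ℝ) * 0 := by
    intro k hk
    rw [ha, eval_u 1 (-1) 0 hi hj hk hST]
  have vv : ∀ k ∈ T \ S, lin a (eInd (T.erase k)) =
      (if i = k then 0 else 1) + (if j = k then 0 else -1) + ((T.erase k).card : ℝ) * 0 := by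
    intro k hk
    rw [ha, eval_v 1 (-1) 0 hi hj]
  have M : lin a (eInd (insert i S)) = 1 := by
    rw [vu i hi, if_pos rfl, if_neg (Ne.symm hij)]; ring
  refine ⟨⟨i, hi, Or.inl rfl⟩, ⟨j, hj, Or.inr rfl⟩,
    insert_ne_erase hplt (hcu i hi) (hcv j hj), a, ?_, ?_, ?_⟩
  · rintro z ⟨k, hk, rfl | rfl⟩ <;> rw [M]
    · rw [vu k hk]; split_ifs <;> linarith
    · rw [vv k hk]; split_ifs <;> linarith
  · rw [M, vv j hj, if_neg hij, if_pos rfl]; ring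
  · rintro z ⟨k, hk, rfl | rfl⟩ heq <;> rw [M] at heq
    · rw [vu k hk] at heq
      rcases eq_or_ne i k with h1 | h1
      · exact Or.inl (by rw [h1])
      · rw [if_neg h1] at heq; exfalso; split_ifs at heq <;> linarith
    · rw [vv k hk] at heq
      rcases eq_or_ne j k with h2 | h2
      · exact Or.inr (by rw [h2])
      · rw [if_neg h2] at heq; exfalso; split_ifs at heq <;> linarith

lemma diag_not_edge {n : ℕ} {p q : ℕ} {S T : Finset (Fin n)} (hplt : p < q)
    (hcu : ∀ k ∈ T \ S, ((insert k S).card : ℝ) = p)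
    (hcv : ∀ k ∈ T \ S, ((T.erase k).card : ℝ) = q)
    {i j : Fin n} (hi : i ∈ T \ S) (hj : j ∈ T \ S) (hij : j ≠ i) :
    ¬ IsEdge (DeltaSTVerts S T) (eInd (insert i S)) (eInd (T.erase i)) := by
  rintro ⟨-, -, -, a, hmax, heq, hex⟩
  have key : lin a (eInd (insert j S)) + lin a (eInd (T.erase j)) =
      lin a (eInd (insert i S)) + lin a (eInd (T.erase i)) := by
    rw [lin_eInd, lin_eInd, lin_eInd, lin_eInd,
      sum_pair (Finset.mem_sdiff.1 hj).2 (Finset.mem_sdiff.1 hj).1,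
      sum_pair (Finset.mem_sdiff.1 hi).2 (Finset.mem_sdiff.1 hi).1]
  have h1 := hmax _ ⟨j, hj, Or.inl rfl⟩
  have h2 := hmax _ ⟨j, hj, Or.inr rfl⟩
  have h3 : lin a (eInd (insert j S)) = lin a (eInd (insert i S)) := by linarith
  rcases hex _ ⟨j, hj, Or.inl rfl⟩ h3 with h | h
  · exact insert_ne_insert (Finset.mem_sdiff.1 hj).2 hij h
  · exact insert_ne_erase hplt (hcu j hj) (hcv i hi) h


lemma IsEdge_symm {n : ℕ} {V : Set (Fin n → ℝ)} {u v : Fin n → ℝ}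
    (h : IsEdge V u v) : IsEdge V v u := by
  obtain ⟨h1, h2, h3, a, h4, h5, h6⟩ := h
  refine ⟨h2, h1, h3.symm, a, ?_, h5.symm, ?_⟩
  · intro z hz
    rw [← h5]; exact h4 z hz
  · intro z hz hz2
    exact (h6 z hz (by rw [hz2, h5])).elim Or.inr Or.inl

lemma antipodal_not_celledge {n : ℕ} {p q : ℕ} {S T : Finset (Fin n)} (hplt : p < q)
    (hcu : ∀ k ∈ T \ S, ((insert k S).card : ℝ) = p)
    (hcv : ∀ k ∈ T \ S, ((T.erase k).card : ℝ) = q)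
    {x y : Finset (Fin n) → ℝ} {W : (Fin n → ℝ) → ℝ}
    (hWx : ∀ i ∈ T \ S, W (eInd (insert i S)) = x (insert i S))
    (hWy : ∀ i ∈ T \ S, W (eInd (T.erase i)) = y (T.erase i))
    (hmin : MinTwiceOn (T \ S) (fun i => x (insert i S) + y (T.erase i)))
    {i : Fin n} (hi : i ∈ T \ S) :
    ¬ IsCellEdge (DeltaSTVerts S T) W (eInd (insert i S)) (eInd (T.erase i)) := by
  rintro ⟨-, -, -, a, c, hle, hu, hv, hex⟩
  rw [hWx i hi] at hu
  rw [hWy i hi] at hv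
  have key : ∀ k ∈ T \ S, lin a (eInd (insert k S)) + lin a (eInd (T.erase k)) =
      lin a (eInd (insert i S)) + lin a (eInd (T.erase i)) := by
    intro k hk
    rw [lin_eInd, lin_eInd, lin_eInd, lin_eInd,
      sum_pair (Finset.mem_sdiff.1 hk).2 (Finset.mem_sdiff.1 hk).1,
      sum_pair (Finset.mem_sdiff.1 hi).2 (Finset.mem_sdiff.1 hi).1]
  have hfi : ∀ k ∈ T \ S, x (insert i S) + y (T.erase i) ≤ x (insert k S) + y (T.erase k) := by
    intro k hk
    have h1 := hle _ ⟨k, hk, Or.inl rfl⟩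
    have h2 := hle _ ⟨k, hk, Or.inr rfl⟩
    rw [hWx k hk] at h1
    rw [hWy k hk] at h2
    linarith [key k hk]
  obtain ⟨a0, ha0, b0, hb0, hab, hfab, hminle⟩ := hmin
  dsimp only at hfab hminle
  obtain ⟨j, hjD, hji, hfj⟩ : ∃ j ∈ T \ S, j ≠ i ∧
      x (insert j S) + y (T.erase j) = x (insert i S) + y (T.erase i) := by
    rcases eq_or_ne a0 i with rfl | hne
    · exact ⟨b0, hb0, Ne.symm hab, hfab.symm⟩
    · exact ⟨a0, ha0, hne, le_antisymm (hminle i hi) (hfi a0 ha0)⟩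
  have h1 := hle _ ⟨j, hjD, Or.inl rfl⟩
  have h2 := hle _ ⟨j, hjD, Or.inr rfl⟩
  rw [hWx j hjD] at h1
  rw [hWy j hjD] at h2
  have he1 : lin a (eInd (insert j S)) + c = W (eInd (insert j S)) := by
    rw [hWx j hjD]
    linarith [key j hjD]
  rcases hex _ ⟨j, hjD, Or.inl rfl⟩ he1 with h | h
  · exact insert_ne_insert (Finset.mem_sdiff.1 hjD).2 hji h
  · exact insert_ne_erase hplt (hcu j hjD) (hcv i hi) h

/-- the regular subdivision of the face `Δ_{S,T}` induced by the weights
`e_{S∪{i}} ↦ x_{S∪{i}}`, `e_{T∖{i}} ↦ y_{T∖{i}}` has the same 1-skeleton as `Δ_{S,T}`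
iff the minimum over `i ∈ T∖S` of `x_{S∪{i}} + y_{T∖{i}}` is attained at least twice. -/
theorem statement11 (n p q : ℕ) (hp : 1 ≤ p) (hpq : p ≤ q)
    (S T : Finset (Fin n)) (hST : S ⊆ T) (hS : S.card = p - 1) (hT : T.card = q + 1)
    (x y : Finset (Fin n) → ℝ) (W : (Fin n → ℝ) → ℝ)
    (hWx : ∀ i ∈ T \ S, W (eInd (insert i S)) = x (insert i S))
    (hWy : ∀ i ∈ T \ S, W (eInd (T.erase i)) = y (T.erase i)) :
    (∀ u v, IsCellEdge (DeltaSTVerts S T) W u v → IsEdge (DeltaSTVerts S T) u v) ↔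
      MinTwiceOn (T \ S) (fun i => x (insert i S) + y (T.erase i)) := by
  have hDmem : ∀ k ∈ T \ S, k ∉ S ∧ k ∈ T := fun k hk =>
    ⟨(Finset.mem_sdiff.1 hk).2, (Finset.mem_sdiff.1 hk).1⟩
  have hcard : (T \ S).card = q + 2 - p := by
    rw [Finset.card_sdiff_of_subset hST, hS, hT]; omega
  have hcuN : ∀ k ∈ T \ S, (insert k S).card = p := by
    intro k hk
    rw [Finset.card_insert_of_notMem (hDmem k hk).1, hS]; omega
  have hcvN : ∀ k ∈ T \ S, (T.erase k).card = q := by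
    intro k hk
    rw [Finset.card_erase_of_mem (hDmem k hk).2, hT]
    omega
  have hcu : ∀ k ∈ T \ S, ((insert k S).card : ℝ) = p := fun k hk => by rw [hcuN k hk]
  have hcv : ∀ k ∈ T \ S, ((T.erase k).card : ℝ) = q := fun k hk => by rw [hcvN k hk]
  rcases eq_or_lt_of_le hpq with rfl | hplt
  · -- p = q : the face is a segment and both sides hold unconditionally
    have hc2 : (T \ S).card = 2 := by omega
    obtain ⟨i, j, hij, hDij⟩ := Finset.card_eq_two.1 hc2
    have hi : i ∈ T \ S := by rw [hDij]; exact Finset.mem_insert_self i {j}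
    have hj : j ∈ T \ S := by rw [hDij]; simp
    have hiS := (hDmem i hi).1
    have hjS := (hDmem j hj).1
    have hiT := (hDmem i hi).2
    have hjT := (hDmem j hj).2
    have hmemT : ∀ k, k ∈ T ↔ k ∈ S ∨ k = i ∨ k = j := by
      intro k
      constructor
      · intro hk
        by_cases hks : k ∈ S
        · exact Or.inl hks
        · have hkD : k ∈ T \ S := Finset.mem_sdiff.2 ⟨hk, hks⟩
          rw [hDij] at hkD
          simp only [Finset.mem_insert, Finset.mem_singleton] at hkD
          exact Or.inr hkD
      · rintro (h | rfl | rfl)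
        · exact hST h
        · exact hiT
        · exact hjT
    have hEi : T.erase i = insert j S := by
      ext k
      rw [Finset.mem_erase, Finset.mem_insert, hmemT k]
      constructor
      · rintro ⟨hki, h | h | h⟩
        · exact Or.inr h
        · exact absurd h hki
        · exact Or.inl h
      · rintro (rfl | h)
        · exact ⟨Ne.symm hij, Or.inr (Or.inr rfl)⟩
        · exact ⟨fun hk => hiS (hk ▸ h), Or.inl h⟩
    have hEj : T.erase j = insert i S := by
      ext k
      rw [Finset.mem_erase, Finset.mem_insert, hmemT k]
      constructor
      · rintro ⟨hkj, h | h | h⟩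
        · exact Or.inr h
        · exact Or.inl h
        · exact absurd h hkj
      · rintro (rfl | h)
        · exact ⟨hij, Or.inr (Or.inl rfl)⟩
        · exact ⟨fun hk => hjS (hk ▸ h), Or.inl h⟩
    have Vmem : ∀ z ∈ DeltaSTVerts S T,
        z = eInd (insert i S) ∨ z = eInd (insert j S) := by
      rintro z ⟨k, hk, rfl | rfl⟩ <;>
          (rw [hDij] at hk
           simp only [Finset.mem_insert, Finset.mem_singleton] at hk) <;>
        rcases hk with rfl | rfl
      · exact Or.inl rfl
      · exact Or.inr rfl
      · exact Or.inr (by rw [hEi])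
      · exact Or.inl (by rw [hEj])
    have e1 : x (insert i S) = y (T.erase j) := by
      rw [← hWx i hi, ← hWy j hj, hEj]
    have e2 : x (insert j S) = y (T.erase i) := by
      rw [← hWx j hj, ← hWy i hi, hEi]
    constructor
    · intro _
      refine ⟨i, hi, j, hj, hij, ?_, ?_⟩
      · dsimp only
        rw [e1, e2]; ring
      · intro k hk
        rw [hDij] at hk
        simp only [Finset.mem_insert, Finset.mem_singleton] at hk
        rcases hk with rfl | rfl
        · exact le_refl _
        · dsimp only
          rw [e1, e2]
          exact le_of_eq (by ring)
    · intro _ u v hcell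
      obtain ⟨hu, hv, huv, -⟩ := hcell
      refine ⟨hu, hv, huv, 0, ?_, ?_, ?_⟩
      · intro z _; simp [lin]
      · simp [lin]
      · intro z hz _
        rcases Vmem u hu with rfl | rfl <;> rcases Vmem v hv with rfl | rfl <;>
          first
            | exact absurd rfl huv
            | (rcases Vmem z hz with rfl | rfl <;> simp)
  · -- p < q
    constructor
    · intro hskel
      by_contra hnmin
      have hne : (T \ S).Nonempty := Finset.card_pos.1 (by omega)
      obtain ⟨i0, hi0, hmin⟩ := Finset.exists_min_image (T \ S)
        (fun i => x (insert i S) + y (T.erase i)) hne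
      have huniq : ∀ j ∈ T \ S, j ≠ i0 →
          x (insert i0 S) + y (T.erase i0) < x (insert j S) + y (T.erase j) := by
        intro j hj hji
        rcases lt_or_ge (x (insert i0 S) + y (T.erase i0))
          (x (insert j S) + y (T.erase j)) with h | h
        · exact h
        · exact absurd ⟨i0, hi0, j, hj, Ne.symm hji, le_antisymm (hmin j hj) h, hmin⟩ hnmin
      set D := T \ S with hD
      set A : Fin n → ℝ := fun j => if j = i0 then x (insert i0 S)
        else (x (insert j S) - y (T.erase j) + (x (insert i0 S) + y (T.erase i0))) / 2 with hA
      have hm3 : (3:ℝ) ≤ (D.card : ℝ) := by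
        have h3 : 3 ≤ D.card := by omega
        exact_mod_cast h3
      have hm2 : (D.card : ℝ) - 2 ≠ 0 := by intro h; linarith
      set c : ℝ := ((∑ j ∈ D, A j) - (x (insert i0 S) + y (T.erase i0))) / ((D.card : ℝ) - 2)
        with hc
      set a : Fin n → ℝ := fun k => if k ∈ D then A k - c else 0 with ha
      have hsaD : ∑ j ∈ D, a j = (∑ j ∈ D, A j) - D.card * c := by
        rw [ha]
        simp only
        rw [Finset.sum_congr rfl (fun j hj => if_pos hj),
          Finset.sum_sub_distrib, Finset.sum_const, nsmul_eq_mul]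
      have hceq : (∑ j ∈ D, A j) - D.card * c + 2 * c = x (insert i0 S) + y (T.erase i0) := by
        rw [hc]
        field_simp
        ring
      have hsum0 : ∀ j ∈ S, a j = 0 := by
        intro j hj
        rw [ha]
        simp only
        rw [if_neg (fun hjD => (Finset.mem_sdiff.1 hjD).2 hj)]
      have hak : ∀ k ∈ D, a k = A k - c := by
        intro k hk
        rw [ha]
        simp only
        rw [if_pos hk]
      have val_u : ∀ k ∈ D, lin a (eInd (insert k S)) + c = A k := by
        intro k hk
        rw [lin_eInd, Finset.sum_insert (hDmem k hk).1, Finset.sum_eq_zero hsum0, hak k hk]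
        ring
      have hsumT : ∑ j ∈ T, a j = ∑ j ∈ D, a j := by
        have hsd := Finset.sum_sdiff (f := a) hST
        rw [Finset.sum_eq_zero hsum0] at hsd
        rw [← hsd, hD]
        ring
      have val_v : ∀ k ∈ D, lin a (eInd (T.erase k)) + c =
          (x (insert i0 S) + y (T.erase i0)) - A k := by
        intro k hk
        rw [lin_eInd]
        have h1 : ∑ j ∈ T.erase k, a j = (∑ j ∈ T, a j) - a k := by
          have h2 := Finset.sum_erase_add T a (hDmem k hk).2
          linarith
        rw [h1, hsumT, hsaD, hak k hk]
        linarith [hceq]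
      have hAi0 : A i0 = x (insert i0 S) := by
        rw [hA]; simp
      have hstrict : ∀ k ∈ D, k ≠ i0 → A k < x (insert k S) ∧
          (x (insert i0 S) + y (T.erase i0)) - A k < y (T.erase k) := by
        intro k hk hki
        have hlt := huniq k hk hki
        have hAk : A k = (x (insert k S) - y (T.erase k) +
            (x (insert i0 S) + y (T.erase i0))) / 2 := by
          rw [hA]; simp only; rw [if_neg hki]
        rw [hAk]
        constructor <;> linarith
      have hcell : IsCellEdge (DeltaSTVerts S T) W (eInd (insert i0 S)) (eInd (T.erase i0)) := by
        refine ⟨⟨i0, hi0, Or.inl rfl⟩, ⟨i0, hi0, Or.inr rfl⟩,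
          insert_ne_erase hplt (hcu i0 hi0) (hcv i0 hi0), a, c, ?_, ?_, ?_, ?_⟩
        · rintro z ⟨k, hk, rfl | rfl⟩
          · rw [hWx k hk, val_u k hk]
            rcases eq_or_ne k i0 with rfl | hki
            · exact le_of_eq hAi0
            · exact le_of_lt (hstrict k hk hki).1
          · rw [hWy k hk, val_v k hk]
            rcases eq_or_ne k i0 with rfl | hki
            · rw [hAi0]; linarith
            · exact le_of_lt (hstrict k hk hki).2
        · rw [hWx i0 hi0, val_u i0 hi0, hAi0]
        · rw [hWy i0 hi0, val_v i0 hi0, hAi0]; ring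
        · rintro z ⟨k, hk, rfl | rfl⟩ hzeq
          · rw [hWx k hk, val_u k hk] at hzeq
            rcases eq_or_ne k i0 with rfl | hki
            · exact Or.inl rfl
            · exact absurd hzeq (ne_of_lt (hstrict k hk hki).1)
          · rw [hWy k hk, val_v k hk] at hzeq
            rcases eq_or_ne k i0 with rfl | hki
            · exact Or.inr rfl
            · exact absurd hzeq (ne_of_lt (hstrict k hk hki).2)
      obtain ⟨j, hj, hji⟩ := Finset.exists_mem_ne
        (show 1 < D.card by omega) i0
      exact diag_not_edge hplt hcu hcv hi0 hj hji (hskel _ _ hcell)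
    · intro hmin u v hcell
      obtain ⟨hu, hv, huv, a, c, hle, hua, hva, hex⟩ := hcell
      obtain ⟨i, hi, rfl | rfl⟩ := hu <;> obtain ⟨j, hj, rfl | rfl⟩ := hv
      · have hij : i ≠ j := by rintro rfl; exact huv rfl
        exact edge_uu hST hplt hcu hcv hi hj hij
      · rcases eq_or_ne i j with rfl | hij
        · exact absurd (⟨⟨i, hi, Or.inl rfl⟩, ⟨i, hi, Or.inr rfl⟩, huv, a, c, hle, hua, hva, hex⟩ :
            IsCellEdge (DeltaSTVerts S T) W (eInd (insert i S)) (eInd (T.erase i)))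
            (antipodal_not_celledge hplt hcu hcv hWx hWy hmin hi)
        · exact edge_uv hST hplt hcu hcv hi hj hij
      · rcases eq_or_ne j i with rfl | hij
        · exact absurd (⟨⟨j, hj, Or.inl rfl⟩, ⟨j, hj, Or.inr rfl⟩, Ne.symm huv, a, c, hle, hva,
            hua, fun z hz h => (hex z hz h).elim Or.inr Or.inl⟩ :
            IsCellEdge (DeltaSTVerts S T) W (eInd (insert j S)) (eInd (T.erase j)))
            (antipodal_not_celledge hplt hcu hcv hWx hWy hmin hj)
        · exact IsEdge_symm (edge_uv hST hplt hcu hcv hj hi hij)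
      · have hij : i ≠ j := by
          rintro rfl; exact huv rfl
        exact edge_vv hST hplt hcu hcv hi hj hij
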